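/- For every nonnegative integer M and every complex number q with 0<|q|<1: Σ_{n=0}^{M} q^{3n²} (−q;q²)_{3n} / ( (q⁶;q⁶)_{M−n} (q⁶;q⁶)_{2n} ) = ( (−q³;q⁶)_M / (q⁶;q⁶)_{2M} ) · Σ_{j=−M}^{M} q^{6j²+2j} [2M choose M+j]_{q⁶}. -/

import Mathlib

open Finset

noncomputable section

/-- The finite q-Pochhammer symbol `(a;q)_n`. -/
def qPoch (a q : ℂ) (n : ℕ) : ℂ := ∏ k ∈ Finset.range n, (1 - a * q ^ k)

/-- The infinite q-Pochhammer symbol `(a;q)_∞`. -/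
def qPochInf (a q : ℂ) : ℂ := ∏' k : ℕ, (1 - a * q ^ k)

/-- The Gaussian binomial coefficient `[N choose k]_q`, zero unless `0 ≤ k ≤ N`. -/
def qBinom (q : ℂ) (N k : ℤ) : ℂ :=
  if 0 ≤ k ∧ k ≤ N then qPoch q q N.toNat / (qPoch q q k.toNat * qPoch q q (N - k).toNat)
  else 0

/-- `1/(a;q)_k`, with the convention that it is `0` for `k < 0`. -/
def invPoch (a q : ℂ) (k : ℤ) : ℂ := if 0 ≤ k then (qPoch a q k.toNat)⁻¹ else 0

/-- Warnaar's refined q-trinomial coefficient `T(L, M; a, b; q)`, where `z` is a fixed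
square root of `q`, so that `q^(n²/2) = z^(n²)`. -/
def Twar (z q : ℂ) (L M a b : ℤ) : ℂ :=
  ∑' n : ℕ, if (L - a - (n : ℤ)) % 2 = 0 then
    z ^ (n ^ 2) * qBinom q M (n : ℤ) * qBinom q (M + b + (L - a - (n : ℤ)) / 2) (M + b) *
      qBinom q (M - b + (L + a - (n : ℤ)) / 2) (M - b)
  else 0

/-- Warnaar's refined q-trinomial coefficient `S(L, M; a, b; q)`. -/
def Swar (q : ℂ) (L M a b : ℤ) : ℂ :=
  ∑' n : ℕ, q ^ ((n : ℤ) * ((n : ℤ) + a)) * qBinom q (M + L - a - 2 * (n : ℤ)) M *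
    qBinom q (M - a + b) (n : ℤ) * qBinom q (M + a - b) ((n : ℤ) + a)

/-- The Andrews–Baxter q-trinomial coefficient `(L, b; a; q)₂`. -/
def roundTri (q : ℂ) (L : ℕ) (b a : ℤ) : ℂ :=
  ∑' n : ℕ, q ^ ((n : ℤ) * ((n : ℤ) + b)) * qPoch q q L * invPoch q q (n : ℤ) *
    invPoch q q ((n : ℤ) + a) * invPoch q q ((L : ℤ) - 2 * (n : ℤ) - a)

/-- The Andrews–Baxter q-trinomial `T₀(L; a; q) = q^((L²-a²)/2) (L,a;a;1/q)₂`, where `z`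
is a fixed square root of `q`, so that `q^((L²-a²)/2) = z^(L²-a²)`. -/
def T0 (z q : ℂ) (L : ℕ) (a : ℤ) : ℂ := z ^ ((L : ℤ) ^ 2 - a ^ 2) * roundTri q⁻¹ L a a

/-- The partial sum `N_k = n_k + n_(k+1) + ... + n_ν` (0-indexed). -/
def Nsum {ν : ℕ} (n : Fin ν → ℕ) (k : Fin ν) : ℕ := ∑ l : Fin ν, if k ≤ l then n l else 0

end

lemma qPoch_zero (a q : ℂ) : qPoch a q 0 = 1 := by simp [qPoch]
lemma qPoch_succ (a q : ℂ) (n : ℕ) : qPoch a q (n+1) = qPoch a q n * (1 - a * q ^ n) := by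
  simp [qPoch, Finset.prod_range_succ]
lemma one_sub_ne {z : ℂ} (h : ‖z‖ < 1) : (1 : ℂ) - z ≠ 0 := by
  intro h0
  have : (1:ℂ) = z := by linear_combination h0
  rw [← this] at h; simp at h
lemma abs_pow_lt {q : ℂ} (h1 : ‖q‖ < 1) {e : ℕ} (he : e ≠ 0) : ‖q ^ e‖ < 1 := by
  rw [norm_pow]; exact pow_lt_one₀ (norm_nonneg q) h1 he
lemma pochQ_ne {q : ℂ} (h1 : ‖q‖ < 1) (m : ℕ) : qPoch (q^6) (q^6) m ≠ 0 := by
  rw [qPoch]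
  apply Finset.prod_ne_zero_iff.2
  intro k _
  have : (q^6) * (q^6)^k = q ^ (6 + 6*k) := by ring
  rw [this]
  exact one_sub_ne (abs_pow_lt h1 (by omega))
lemma oneSubQ_ne {q : ℂ} (h1 : ‖q‖ < 1) (k : ℕ) : (1:ℂ) - (q^6) * (q^6)^k ≠ 0 := by
  have : (q^6) * (q^6)^k = q ^ (6 + 6*k) := by ring
  rw [this]; exact one_sub_ne (abs_pow_lt h1 (by omega))

lemma tri_succ (q : ℂ) (k : ℕ) : (q^3)^((k+1)*k) = (q^3)^(k*(k-1)) * (q^3)^(2*k) := by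
  rw [← pow_add]
  congr 1
  cases k with
  | zero => rfl
  | succ k => simp only [Nat.add_sub_cancel]; ring

section binthm
variable {q : ℂ} (h1 : ‖q‖ < 1)

/-- The summand of the finite q-binomial theorem in base `q^6`. -/
noncomputable def Fb (q z : ℂ) (N k : ℕ) : ℂ :=
  (q^3)^(k*(k-1)) * z^k * qPoch (q^6) (q^6) N /
    (qPoch (q^6) (q^6) k * qPoch (q^6) (q^6) (N - k))

include h1

lemma Fb_pascal (z : ℂ) {N k : ℕ} (hk : k + 1 ≤ N) :
    Fb q z (N+1) (k+1) = Fb q z N (k+1) + z * (q^6)^N * Fb q z N k := by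
  obtain ⟨e, he⟩ : ∃ e, N = k + 1 + e := ⟨N - (k+1), by omega⟩
  subst he
  have h2 : k + 1 + e + 1 - (k + 1) = e + 1 := by omega
  have h3 : k + 1 + e - (k + 1) = e := by omega
  have h4 : k + 1 + e - k = e + 1 := by omega
  have h5 : (k + 1) * (k + 1 - 1) = (k+1)*k := by simp
  rw [Fb, Fb, Fb, h2, h3, h4, h5, tri_succ, qPoch_succ (q^6) (q^6) (k+1+e), qPoch_succ (q^6) (q^6) k,
    qPoch_succ (q^6) (q^6) e]
  have n1 := pochQ_ne h1 (k+1+e)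
  have n2 := pochQ_ne h1 k
  have n3 := pochQ_ne h1 e
  have n4 := oneSubQ_ne h1 k
  have n5 := oneSubQ_ne h1 e
  field_simp
  ring

lemma Fb_top (z : ℂ) (N : ℕ) : Fb q z (N+1) (N+1) = z * (q^6)^N * Fb q z N N := by
  rw [Fb, Fb]
  simp only [Nat.sub_self]
  have h5 : (N + 1) * (N + 1 - 1) = (N+1)*N := by simp
  rw [h5, tri_succ, qPoch_zero,
    show qPoch (q^6) (q^6) (N+1) = qPoch (q^6) (q^6) N * (1 - (q^6) * (q^6)^N) from qPoch_succ _ _ N]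
  have n1 := pochQ_ne h1 N
  have n4 := oneSubQ_ne h1 N
  field_simp
  ring

/-- Finite q-binomial theorem in base `q^6`. -/
lemma binthm (z : ℂ) (N : ℕ) :
    ∏ k ∈ range N, (1 + z * (q^6)^k) = ∑ k ∈ range (N+1), Fb q z N k := by
  induction N with
  | zero => simp [Fb, qPoch_zero]
  | succ N ih =>
    rw [Finset.prod_range_succ, ih, Finset.sum_range_succ' (Fb q z (N+1)),
      Finset.sum_range_succ (fun k => Fb q z (N+1) (k+1)) N]
    have step : ∀ k ∈ range N, Fb q z (N+1) (k+1) = Fb q z N (k+1) + z * (q^6)^N * Fb q z N k := by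
      intro k hk
      exact Fb_pascal h1 z (by simp at hk; omega)
    have h0 : Fb q z (N+1) 0 = Fb q z N 0 := by
      rw [Fb, Fb]
      simp only [Nat.zero_eq, Nat.sub_zero, pow_zero, qPoch_zero]
      have n1 := pochQ_ne h1 (N+1)
      have n2 := pochQ_ne h1 N
      field_simp
    rw [Finset.sum_congr rfl step, Fb_top h1 z N, h0, Finset.sum_add_distrib, ← Finset.mul_sum]
    have e1 : ∑ x ∈ range N, Fb q z N (x+1) + Fb q z N 0 = ∑ k ∈ range (N+1), Fb q z N k :=
      (Finset.sum_range_succ' (Fb q z N) N).symm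
    have e2 : ∑ x ∈ range N, Fb q z N x + Fb q z N N = ∑ k ∈ range (N+1), Fb q z N k :=
      (Finset.sum_range_succ (Fb q z N) N).symm
    linear_combination -e1 - (z * (q^6)^N) * e2

end binthm


section prodlem
variable {q : ℂ}

/-- `∏_{k<2n} (Q^n + q^5 Q^k) = q^(9n²+2n) (-q;q⁶)_n (-q⁵;q⁶)_n`. -/
lemma prodlem (n : ℕ) :
    ∏ k ∈ range (2*n), ((q^6)^n + q^5 * (q^6)^k)
      = q^(9*n^2+2*n) * qPoch (-q) (q^6) n * qPoch (-q^5) (q^6) n := by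
  induction n with
  | zero => simp [qPoch_zero]
  | succ n ih =>
    have h2 : 2*(n+1) = (2*n+1) + 1 := by ring
    rw [h2, Finset.prod_range_succ' (fun k => (q^6)^(n+1) + q^5 * (q^6)^k) (2*n+1)]
    have hshift : ∀ k, (q^6)^(n+1) + q^5 * (q^6)^(k+1) = (q^6) * ((q^6)^n + q^5 * (q^6)^k) := by
      intro k; ring
    rw [Finset.prod_congr rfl (fun k _ => hshift k), Finset.prod_mul_distrib,
      Finset.prod_const, Finset.prod_range_succ, ih, qPoch_succ, qPoch_succ]
    simp only [pow_zero, mul_one, Finset.card_range]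
    ring
end prodlem


section star
variable {q : ℂ}

lemma cast_ksub (k : ℕ) : ((k*(k-1) : ℕ) : ℤ) = (k:ℤ)^2 - k := by
  cases k with
  | zero => simp
  | succ m => push_cast [Nat.add_sub_cancel]; ring

lemma star_scalar (hq0 : q ≠ 0) (k n : ℕ) :
    (q^6)^(n*(2*n)) * ((q^3)^(k*(k-1)) * (q^5 * ((q^6)^n)⁻¹)^k)
      = q^(9*n^2+2*n) * q ^ ((3*((k:ℤ)-n)^2 + 2*((k:ℤ)-n)) : ℤ) := by
  rw [show ((q:ℂ)^6)^(n*(2*n)) = q^(6*(n*(2*n))) by rw [← pow_mul],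
    show ((q:ℂ)^3)^(k*(k-1)) = q^(3*(k*(k-1))) by rw [← pow_mul],
    mul_pow, show ((q:ℂ)^5)^k = q^(5*k) by rw [← pow_mul],
    inv_pow, show (((q:ℂ)^6)^n)^k = q^(6*n*k) by rw [← pow_mul, ← pow_mul, Nat.mul_assoc 6 n k]]
  rw [← zpow_natCast q (6*(n*(2*n))), ← zpow_natCast q (3*(k*(k-1))), ← zpow_natCast q (5*k),
    ← zpow_natCast q (6*n*k), ← zpow_neg, ← zpow_natCast q (9*n^2+2*n),
    ← zpow_add₀ hq0, ← zpow_add₀ hq0, ← zpow_add₀ hq0, ← zpow_add₀ hq0]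
  congr 1
  cases k with
  | zero => push_cast; ring
  | succ m => push_cast [Nat.add_sub_cancel]; ring

lemma reindex (n : ℕ) (T : ℤ → ℂ) :
    ∑ j ∈ Icc (-(n:ℤ)) (n:ℤ), T j = ∑ k ∈ range (2*n+1), T ((k:ℤ) - n) := by
  refine Finset.sum_nbij' (i := fun j => (j + n).toNat) (j := fun k => (k:ℤ) - n) ?_ ?_ ?_ ?_ ?_
  · intro j hj; simp only [Finset.mem_Icc] at hj; simp only [Finset.mem_range]; omega
  · intro k hk; simp only [Finset.mem_range] at hk; simp only [Finset.mem_Icc]; omega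
  · intro j hj; simp only [Finset.mem_Icc] at hj; omega
  · intro k hk; simp only [Finset.mem_range] at hk; omega
  · intro j hj; simp only [Finset.mem_Icc] at hj
    congr 1; omega

lemma star (hq0 : q ≠ 0) (h1 : ‖q‖ < 1) (n : ℕ) :
    qPoch (-q) (q^6) n * qPoch (-q^5) (q^6) n / qPoch (q^6) (q^6) (2*n)
      = ∑ j ∈ Icc (-(n:ℤ)) (n:ℤ),
          q ^ (3*j^2+2*j) /
            (qPoch (q^6) (q^6) (n+j).toNat * qPoch (q^6) (q^6) (n-j).toNat) := by
  have hQn : ((q:ℂ)^6)^n ≠ 0 := pow_ne_zero _ (pow_ne_zero _ hq0)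
  have hqe : (q:ℂ)^(9*n^2+2*n) ≠ 0 := pow_ne_zero _ hq0
  set z : ℂ := q^5 * ((q^6)^n)⁻¹ with hz
  have hprod : (q^6)^(n*(2*n)) * ∑ k ∈ range (2*n+1), Fb q z (2*n) k
      = q^(9*n^2+2*n) * qPoch (-q) (q^6) n * qPoch (-q^5) (q^6) n := by
    rw [← binthm h1 z (2*n), ← prodlem n]
    have hrw : ∏ k ∈ range (2*n), ((q^6)^n * (1 + z*(q^6)^k))
        = (q^6)^(n*(2*n)) * ∏ k ∈ range (2*n), (1 + z*(q^6)^k) := by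
      rw [Finset.prod_mul_distrib, Finset.prod_const, Finset.card_range, ← pow_mul]
    rw [← hrw]
    apply Finset.prod_congr rfl
    intro k _
    rw [hz]
    field_simp
  apply mul_left_cancel₀ hqe
  rw [reindex n (fun j => q ^ (3*j^2+2*j) /
      (qPoch (q^6) (q^6) (n+j).toNat * qPoch (q^6) (q^6) (n-j).toNat)), Finset.mul_sum]
  have key : ∀ k ∈ range (2*n+1),
      q^(9*n^2+2*n) * (q ^ (3*((k:ℤ)-n)^2+2*((k:ℤ)-n)) /
        (qPoch (q^6) (q^6) ((n:ℤ)+((k:ℤ)-n)).toNat * qPoch (q^6) (q^6) ((n:ℤ)-((k:ℤ)-n)).toNat))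
      = (q^6)^(n*(2*n)) * Fb q z (2*n) k / qPoch (q^6) (q^6) (2*n) := by
    intro k hk
    simp only [Finset.mem_range] at hk
    have e1 : ((n:ℤ)+((k:ℤ)-n)).toNat = k := by omega
    have e2 : ((n:ℤ)-((k:ℤ)-n)).toNat = 2*n - k := by omega
    rw [e1, e2]
    have hsc : (q : ℂ) ^ ((3*((k:ℤ)-n)^2 + 2*((k:ℤ)-n)) : ℤ)
        = (q^6)^(n*(2*n)) * ((q^3)^(k*(k-1)) * z^k) / q^(9*n^2+2*n) := by
      rw [eq_div_iff hqe]
      rw [hz, star_scalar hq0 k n]; ring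
    rw [hsc, Fb]
    have n1 := pochQ_ne h1 k
    have n2 := pochQ_ne h1 (2*n - k)
    have n3 := pochQ_ne h1 (2*n)
    field_simp
  rw [Finset.sum_congr rfl key]
  rw [← Finset.sum_div, ← Finset.mul_sum, hprod]
  ring
end star


lemma poch3_ne {q : ℂ} (h1 : ‖q‖ < 1) (n : ℕ) : qPoch (-q^3) (q^6) n ≠ 0 := by
  rw [qPoch]
  apply Finset.prod_ne_zero_iff.2
  intro k _
  have : (1:ℂ) - (-q^3) * (q^6)^k = 1 - (-(q ^ (3 + 6*k))) := by ring
  rw [this]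
  intro hc
  have : (1:ℂ) = -(q ^ (3+6*k)) := by linear_combination hc
  have h2 := abs_pow_lt h1 (e := 3+6*k) (by omega)
  rw [← neg_neg (q ^ (3+6*k)), ← this] at h2
  simp at h2
lemma oneSubQpow_ne {q : ℂ} (h1 : ‖q‖ < 1) {e : ℕ} (he : e ≠ 0) :
    (1:ℂ) - (q^6)^e ≠ 0 := by
  have : ((q:ℂ)^6)^e = q ^ (6*e) := by rw [← pow_mul]
  rw [this]; exact one_sub_ne (abs_pow_lt h1 (by omega))
lemma onePlusQ3_ne {q : ℂ} (h1 : ‖q‖ < 1) (k : ℕ) : (1:ℂ) + q^3 * (q^6)^k ≠ 0 := by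
  have h := poch3_ne h1 (k+1)
  intro hc
  apply h
  rw [qPoch_succ]
  rw [show (1:ℂ) - -q^3 * (q^6)^k = 1 + q^3 * (q^6)^k by ring, hc, mul_zero]



section dag
variable {q : ℂ}

set_option maxHeartbeats 2000000 in
/-- The WZ certificate identity for the Bailey-type kernel. -/
lemma keyK (hq0 : q ≠ 0) (h1 : ‖q‖ < 1) (j d r : ℕ) :
    ((1-(q^6)^(d+r+1)) * (1-(q^6)^(2*j+d+r+1))) *
        (q^(3*(j+d)^2) * qPoch (-q^3) (q^6) (j+d) /
          (qPoch (q^6) (q^6) (r+1) * qPoch (q^6) (q^6) d * qPoch (q^6) (q^6) (2*j+d)))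
      - (1 + q^(6*(j+d+r)+3)) *
        (q^(3*(j+d)^2) * qPoch (-q^3) (q^6) (j+d) /
          (qPoch (q^6) (q^6) r * qPoch (q^6) (q^6) d * qPoch (q^6) (q^6) (2*j+d)))
    = (-((q^6)^r) * q^(3*(j+d+1)^2) * qPoch (-q^3) (q^6) (j+d+1) *
          (1-(q^6)^(d+1)) * (1-(q^6)^(2*j+d+1)) /
          (qPoch (q^6) (q^6) r * qPoch (q^6) (q^6) (d+1) * qPoch (q^6) (q^6) (2*j+d+1)))
      - (-((q^6)^(r+1)) * q^(3*(j+d)^2) * qPoch (-q^3) (q^6) (j+d) *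
          (1-(q^6)^d) * (1-(q^6)^(2*j+d)) /
          (qPoch (q^6) (q^6) (r+1) * qPoch (q^6) (q^6) d * qPoch (q^6) (q^6) (2*j+d))) := by
  rw [qPoch_succ (q^6) (q^6) r, qPoch_succ (q^6) (q^6) d,
    show 2*j+d+1 = (2*j+d)+1 from rfl, qPoch_succ (q^6) (q^6) (2*j+d),
    show j+d+1 = (j+d)+1 from rfl, qPoch_succ (-q^3) (q^6) (j+d)]
  have n1 := pochQ_ne h1 r
  have n2 := pochQ_ne h1 d
  have n3 := pochQ_ne h1 (2*j+d)
  have n4 := oneSubQ_ne h1 r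
  have n5 := oneSubQ_ne h1 d
  have n6 := oneSubQ_ne h1 (2*j+d)
  have hd1 : qPoch (q^6) (q^6) r * (1 - q^6*(q^6)^r) * qPoch (q^6) (q^6) d
      * qPoch (q^6) (q^6) (2*j+d) ≠ 0 := by
    exact mul_ne_zero (mul_ne_zero (mul_ne_zero n1 n4) n2) n3
  have hd2 : qPoch (q^6) (q^6) r * qPoch (q^6) (q^6) d * qPoch (q^6) (q^6) (2*j+d) ≠ 0 :=
    mul_ne_zero (mul_ne_zero n1 n2) n3
  have hd3 : qPoch (q^6) (q^6) r * (qPoch (q^6) (q^6) d * (1 - q^6*(q^6)^d))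
      * (qPoch (q^6) (q^6) (2*j+d) * (1 - q^6*(q^6)^(2*j+d))) ≠ 0 :=
    mul_ne_zero (mul_ne_zero n1 (mul_ne_zero n2 n5)) (mul_ne_zero n3 n6)
  rw [← mul_div_assoc, ← mul_div_assoc,
    div_sub_div _ _ hd1 hd2, div_sub_div _ _ hd3 hd1,
    div_eq_div_iff (mul_ne_zero hd1 hd2) (mul_ne_zero hd3 hd1)]
  ring

/-- The Bailey-type kernel summation (†). -/
lemma dag (hq0 : q ≠ 0) (h1 : ‖q‖ < 1) (j m : ℕ) :
    ∑ d ∈ range (m+1), q^(3*(j+d)^2) * qPoch (-q^3) (q^6) (j+d) /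
        (qPoch (q^6) (q^6) (m-d) * qPoch (q^6) (q^6) d * qPoch (q^6) (q^6) (2*j+d))
      = qPoch (-q^3) (q^6) (j+m) * q^(3*j^2) /
        (qPoch (q^6) (q^6) m * qPoch (q^6) (q^6) (2*j+m)) := by
  induction m with
  | zero =>
    rw [Finset.sum_range_one]
    simp only [Nat.sub_zero, Nat.add_zero, qPoch_zero]
    ring
  | succ m ih =>
    set A : ℂ := (1-(q^6)^(m+1)) * (1-(q^6)^(2*j+m+1)) with hA
    set B : ℂ := 1 + q^(6*(j+m)+3) with hB
    have hAne : A ≠ 0 := mul_ne_zero (oneSubQpow_ne h1 (by omega)) (oneSubQpow_ne h1 (by omega))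
    set H : ℕ → ℂ := fun d => -((q^6)^(m+1-d)) * q^(3*(j+d)^2) * qPoch (-q^3) (q^6) (j+d) *
        (1-(q^6)^d) * (1-(q^6)^(2*j+d)) /
        (qPoch (q^6) (q^6) (m+1-d) * qPoch (q^6) (q^6) d * qPoch (q^6) (q^6) (2*j+d)) with hH
    have tele : ∀ d ∈ range (m+1),
        A * (q^(3*(j+d)^2) * qPoch (-q^3) (q^6) (j+d) /
            (qPoch (q^6) (q^6) (m+1-d) * qPoch (q^6) (q^6) d * qPoch (q^6) (q^6) (2*j+d)))
          = B * (q^(3*(j+d)^2) * qPoch (-q^3) (q^6) (j+d) /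
            (qPoch (q^6) (q^6) (m-d) * qPoch (q^6) (q^6) d * qPoch (q^6) (q^6) (2*j+d)))
            + (H (d+1) - H d) := by
      intro d hd
      simp only [Finset.mem_range] at hd
      obtain ⟨r, hr⟩ : ∃ r, m = d + r := ⟨m - d, by omega⟩
      rw [hH, hA, hB]
      dsimp only
      rw [show m+1-d = r+1 by omega, show m-d = r by omega, show m+1-(d+1) = r by omega,
        show 2*j+m+1 = 2*j+d+r+1 by omega, show m+1 = d+r+1 by omega,
        show 6*(j+m)+3 = 6*(j+d+r)+3 by omega,
        show 2*j+(d+1) = 2*j+d+1 by omega, show j+(d+1) = j+d+1 by omega]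
      linear_combination keyK hq0 h1 j d r
    have sumtele :
        A * ∑ d ∈ range (m+1), (q^(3*(j+d)^2) * qPoch (-q^3) (q^6) (j+d) /
            (qPoch (q^6) (q^6) (m+1-d) * qPoch (q^6) (q^6) d * qPoch (q^6) (q^6) (2*j+d)))
          = B * ∑ d ∈ range (m+1), (q^(3*(j+d)^2) * qPoch (-q^3) (q^6) (j+d) /
            (qPoch (q^6) (q^6) (m-d) * qPoch (q^6) (q^6) d * qPoch (q^6) (q^6) (2*j+d)))
            + (H (m+1) - H 0) := by
      rw [Finset.mul_sum, Finset.mul_sum, Finset.sum_congr rfl tele, Finset.sum_add_distrib,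
        Finset.sum_range_sub H]
    have hH0 : H 0 = 0 := by
      rw [hH]; dsimp only; simp
    have hHtop : H (m+1) = -(A * (q^(3*(j+(m+1))^2) * qPoch (-q^3) (q^6) (j+(m+1)) /
        (qPoch (q^6) (q^6) (m+1-(m+1)) * qPoch (q^6) (q^6) (m+1) * qPoch (q^6) (q^6) (2*j+(m+1))))) := by
      rw [hH, hA]
      dsimp only
      rw [Nat.sub_self, qPoch_zero]
      rw [show 2*j+(m+1) = 2*j+m+1 by omega]
      have n1 := pochQ_ne h1 (m+1)
      have n2 := pochQ_ne h1 (2*j+m+1)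
      field_simp
    have hstep : A * (qPoch (-q^3) (q^6) (j+(m+1)) * q^(3*j^2) /
          (qPoch (q^6) (q^6) (m+1) * qPoch (q^6) (q^6) (2*j+(m+1))))
        = B * (qPoch (-q^3) (q^6) (j+m) * q^(3*j^2) /
          (qPoch (q^6) (q^6) m * qPoch (q^6) (q^6) (2*j+m))) := by
      rw [show j+(m+1) = (j+m)+1 from rfl, qPoch_succ (-q^3) (q^6) (j+m),
        qPoch_succ (q^6) (q^6) m, show 2*j+(m+1) = (2*j+m)+1 by omega,
        qPoch_succ (q^6) (q^6) (2*j+m), hA, hB]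
      have n1 := pochQ_ne h1 m
      have n2 := pochQ_ne h1 (2*j+m)
      have n4 := oneSubQ_ne h1 m
      have n5 := oneSubQ_ne h1 (2*j+m)
      field_simp
      ring
    apply mul_left_cancel₀ hAne
    rw [Finset.sum_range_succ, mul_add, sumtele, ih, hH0, hHtop, hstep]
    ring
end dag


lemma split (n : ℕ) :
    qPoch (-q) (q^2) (3*n)
      = qPoch (-q) (q^6) n * qPoch (-q^3) (q^6) n * qPoch (-q^5) (q^6) n := by
  induction n with
  | zero => simp [qPoch_zero]
  | succ n ih =>
    rw [show 3*(n+1) = 3*n+1+1+1 by ring, qPoch_succ, qPoch_succ, qPoch_succ, ih,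
      qPoch_succ, qPoch_succ, qPoch_succ]
    ring

lemma swapsum (M : ℕ) (f : ℕ → ℤ → ℂ) :
    ∑ n ∈ range (M+1), ∑ j ∈ Icc (-(n:ℤ)) (n:ℤ), f n j
      = ∑ j ∈ Icc (-(M:ℤ)) (M:ℤ), ∑ n ∈ Icc j.natAbs M, f n j := by
  rw [Finset.sum_sigma', Finset.sum_sigma']
  refine Finset.sum_nbij' (i := fun p => ⟨p.2, p.1⟩) (j := fun p => ⟨p.2, p.1⟩)
    ?_ ?_ ?_ ?_ ?_
  · rintro ⟨n, j⟩ hp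
    simp only [Finset.mem_sigma, Finset.mem_range, Finset.mem_Icc] at *
    omega
  · rintro ⟨j, n⟩ hp
    simp only [Finset.mem_sigma, Finset.mem_range, Finset.mem_Icc] at *
    omega
  · rintro ⟨n, j⟩ _; rfl
  · rintro ⟨j, n⟩ _; rfl
  · rintro ⟨n, j⟩ _; rfl



theorem statement_9 (M : ℕ) (q : ℂ) (h0 : 0 < ‖q‖) (h1 : ‖q‖ < 1) :
    ∑ n ∈ Finset.range (M + 1),
        q ^ (3 * n ^ 2) * qPoch (-q) (q ^ 2) (3 * n) /
          (qPoch (q ^ 6) (q ^ 6) (M - n) * qPoch (q ^ 6) (q ^ 6) (2 * n))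
    = qPoch (-q ^ 3) (q ^ 6) M / qPoch (q ^ 6) (q ^ 6) (2 * M) *
        ∑ j ∈ Finset.Icc (-(M : ℤ)) (M : ℤ),
          q ^ (6 * j ^ 2 + 2 * j) * qBinom (q ^ 6) (2 * (M : ℤ)) ((M : ℤ) + j) := by
  have hq0 : q ≠ 0 := by
    intro h; rw [h] at h0; simp at h0
  -- Step A : expand the left side into a double sum
  have stepA : ∑ n ∈ Finset.range (M + 1),
        q ^ (3 * n ^ 2) * qPoch (-q) (q ^ 2) (3 * n) /
          (qPoch (q ^ 6) (q ^ 6) (M - n) * qPoch (q ^ 6) (q ^ 6) (2 * n))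
      = ∑ n ∈ range (M+1), ∑ j ∈ Icc (-(n:ℤ)) (n:ℤ),
          (q ^ (3 * n ^ 2) * qPoch (-q^3) (q^6) n / qPoch (q^6) (q^6) (M-n)) *
            (q ^ (3*j^2+2*j) /
              (qPoch (q^6) (q^6) ((n:ℤ)+j).toNat * qPoch (q^6) (q^6) ((n:ℤ)-j).toNat)) := by
    refine Finset.sum_congr rfl fun n _ => ?_
    have e1 : q ^ (3 * n ^ 2) * qPoch (-q) (q ^ 2) (3 * n) /
          (qPoch (q ^ 6) (q ^ 6) (M - n) * qPoch (q ^ 6) (q ^ 6) (2 * n))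
        = (q ^ (3 * n ^ 2) * qPoch (-q^3) (q^6) n / qPoch (q^6) (q^6) (M-n)) *
          (qPoch (-q) (q^6) n * qPoch (-q^5) (q^6) n / qPoch (q^6) (q^6) (2*n)) := by
      rw [split]; ring
    rw [e1, star hq0 h1 n, Finset.mul_sum]
  rw [stepA, swapsum M]
  -- Step B : evaluate the inner sum by the kernel identity
  have stepB : ∀ j ∈ Icc (-(M:ℤ)) (M:ℤ),
      (∑ n ∈ Icc j.natAbs M,
          (q ^ (3 * n ^ 2) * qPoch (-q^3) (q^6) n / qPoch (q^6) (q^6) (M-n)) *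
            (q ^ (3*j^2+2*j) /
              (qPoch (q^6) (q^6) ((n:ℤ)+j).toNat * qPoch (q^6) (q^6) ((n:ℤ)-j).toNat)))
      = q ^ (6*j^2+2*j) * (qPoch (-q^3) (q^6) M /
          (qPoch (q^6) (q^6) ((M:ℤ)+j).toNat * qPoch (q^6) (q^6) ((M:ℤ)-j).toNat)) := by
    intro j hj
    simp only [Finset.mem_Icc] at hj
    set J := j.natAbs with hJ
    have hJM : J ≤ M := by omega
    have hJ2 : ((J:ℤ)) * J = j * j := by rw [hJ]; exact_mod_cast Int.natAbs_mul_self (a := j)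
    have hden : ∀ n : ℕ, J ≤ n →
        qPoch (q^6) (q^6) ((n:ℤ)+j).toNat * qPoch (q^6) (q^6) ((n:ℤ)-j).toNat
          = qPoch (q^6) (q^6) (n-J) * qPoch (q^6) (q^6) (n+J) := by
      intro n hn
      rcases le_or_gt 0 j with h | h
      · rw [show ((n:ℤ)+j).toNat = n+J by omega, show ((n:ℤ)-j).toNat = n-J by omega]
        exact mul_comm _ _
      · rw [show ((n:ℤ)+j).toNat = n-J by omega, show ((n:ℤ)-j).toNat = n+J by omega]
    rw [← Finset.Ico_add_one_right_eq_Icc, Finset.sum_Ico_eq_sum_range,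
      show M + 1 - J = (M-J)+1 by omega]
    have perterm : ∀ d ∈ range ((M-J)+1),
        (q ^ (3 * (J+d) ^ 2) * qPoch (-q^3) (q^6) (J+d) / qPoch (q^6) (q^6) (M-(J+d))) *
            (q ^ (3*j^2+2*j) /
              (qPoch (q^6) (q^6) (((J+d:ℕ):ℤ)+j).toNat * qPoch (q^6) (q^6) (((J+d:ℕ):ℤ)-j).toNat))
        = q ^ (3*j^2+2*j) * (q^(3*(J+d)^2) * qPoch (-q^3) (q^6) (J+d) /
            (qPoch (q^6) (q^6) ((M-J)-d) * qPoch (q^6) (q^6) d * qPoch (q^6) (q^6) (2*J+d))) := by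
      intro d _
      rw [hden (J+d) (by omega), show M-(J+d) = (M-J)-d by omega,
        show J+d-J = d by omega, show J+d+J = 2*J+d by omega]
      ring
    rw [Finset.sum_congr rfl perterm, ← Finset.mul_sum, dag hq0 h1 J (M-J),
      show J+(M-J) = M by omega, show 2*J+(M-J) = M+J by omega, hden M hJM]
    have hsc : q ^ (3*j^2+2*j) * (q:ℂ)^(3*J^2) = q ^ (6*j^2+2*j) := by
      rw [← zpow_natCast q (3*J^2), ← zpow_add₀ hq0]
      congr 1
      push_cast
      linear_combination 3 * hJ2
    calc q ^ (3*j^2+2*j) * (qPoch (-q^3) (q^6) M * q^(3*J^2) /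
            (qPoch (q^6) (q^6) (M-J) * qPoch (q^6) (q^6) (M+J)))
        = (q ^ (3*j^2+2*j) * (q:ℂ)^(3*J^2)) * (qPoch (-q^3) (q^6) M /
            (qPoch (q^6) (q^6) (M-J) * qPoch (q^6) (q^6) (M+J))) := by ring
      _ = _ := by rw [hsc]
  rw [Finset.sum_congr rfl stepB, Finset.mul_sum]
  -- Step C : match with the right-hand side term by term
  refine Finset.sum_congr rfl fun j hj => ?_
  simp only [Finset.mem_Icc] at hj
  rw [qBinom, if_pos ⟨by omega, by omega⟩,
    show (2*(M:ℤ)).toNat = 2*M by omega,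
    show (2*(M:ℤ) - ((M:ℤ)+j)) = (M:ℤ)-j by ring]
  have n1 := pochQ_ne h1 (2*M)
  have n2 := pochQ_ne h1 ((M:ℤ)+j).toNat
  have n3 := pochQ_ne h1 ((M:ℤ)-j).toNat
  field_simp
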